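/- Let 1 < γ ≤ 2 and let g : [0, π/2] → ℝ be continuously differentiable with g(0) = 0. Then sup_{θ ∈ [0,π/2]} |g(θ)|² ≤ (C/(γ-1)) ∫_0^{π/2} |g'(θ)|² sin(2θ)^{2-γ} dθ for an absolute constant C. -/

import Mathlib

open Real MeasureTheory

private lemma ae_ne_vol (c : ℝ) : ∀ᵐ t : ℝ, t ≠ c := by
  refine MeasureTheory.ae_iff.2 ?_
  simpa using Real.volume_singleton (a := c)

private lemma sin_half {γ : ℝ} (hγ2 : γ ≤ 2) {u : ℝ} (hu0 : 0 ≤ u) (hu : u ≤ π/4) :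
    Real.sin (2*u) ^ (γ-2) ≤ (4/π*u) ^ (γ-2) := by
  rcases hu0.eq_or_lt with h | h
  · rw [← h]; norm_num
  · have hsin : 4/π*u ≤ Real.sin (2*u) := by
      have := Real.mul_le_sin (x := 2*u) (by linarith) (by linarith)
      calc 4/π*u = 2/π*(2*u) := by ring
        _ ≤ _ := this
    exact Real.rpow_le_rpow_of_nonpos (by positivity) hsin (by linarith)

private lemma sin_maj {γ : ℝ} (hγ2 : γ ≤ 2) {t : ℝ} (ht : t ∈ Set.Icc 0 (π/2)) :
    Real.sin (2*t) ^ (γ-2) ≤ (4/π*t) ^ (γ-2) + (4/π*(π/2 - t)) ^ (γ-2) := by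
  obtain ⟨ht0, ht1⟩ := ht
  rcases le_total t (π/4) with h | h
  · have h2 : (0:ℝ) ≤ (4/π*(π/2 - t)) ^ (γ-2) :=
      Real.rpow_nonneg (mul_nonneg (by positivity) (by linarith)) _
    linarith [sin_half hγ2 ht0 h]
  · have h2 : (0:ℝ) ≤ (4/π*t) ^ (γ-2) := Real.rpow_nonneg (mul_nonneg (by positivity) ht0) _
    have hs : Real.sin (2*t) = Real.sin (2*(π/2 - t)) := by
      rw [show 2*(π/2 - t) = π - 2*t by ring, Real.sin_pi_sub]
    have := sin_half hγ2 (u := π/2 - t) (by linarith) (by linarith)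
    rw [hs]
    linarith

private lemma maj_int1 {γ : ℝ} (hγ1 : 1 < γ) :
    IntervalIntegrable (fun t : ℝ => (4/π*t) ^ (γ-2)) volume 0 (π/2) := by
  have h : IntervalIntegrable (fun x : ℝ => x ^ (γ-2)) volume 0 2 :=
    intervalIntegral.intervalIntegrable_rpow' (by linarith)
  have h2 := h.comp_mul_left (c := 4/π)
  have e1 : (0:ℝ)/(4/π) = 0 := by simp
  have e2 : (2:ℝ)/(4/π) = π/2 := by
    field_simp
    ring
  rw [e1, e2] at h2
  exact h2

private lemma maj_int2 {γ : ℝ} (hγ1 : 1 < γ) :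
    IntervalIntegrable (fun t : ℝ => (4/π*(π/2 - t)) ^ (γ-2)) volume 0 (π/2) := by
  have h := ((maj_int1 hγ1).comp_sub_left (π/2)).symm
  simpa using h

private lemma maj_val1 {γ : ℝ} (hγ1 : 1 < γ) (hγ2 : γ ≤ 2) :
    ∫ t in (0:ℝ)..(π/2), (4/π*t) ^ (γ-2) ≤ 2/(γ-1) := by
  have hcong : Set.EqOn (fun t : ℝ => (4/π*t) ^ (γ-2))
      (fun t : ℝ => (4/π)^(γ-2) * t^(γ-2)) (Set.uIcc 0 (π/2)) := by
    intro t ht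
    rw [Set.uIcc_of_le (by positivity)] at ht
    exact Real.mul_rpow (by positivity) ht.1
  rw [intervalIntegral.integral_congr hcong, intervalIntegral.integral_const_mul,
    integral_rpow (Or.inl (by linarith))]
  have h0 : (0:ℝ) ^ (γ-2+1) = 0 := Real.zero_rpow (by intro h; nlinarith)
  rw [h0, sub_zero, show γ-2+1 = γ-1 by ring]
  have hkey : (4/π)^(γ-2) * (π/2)^(γ-1) ≤ 2 := by
    have e1 : (π/2:ℝ)^(γ-1) = (π/2)^(γ-2)*(π/2) := by
      rw [show γ-1 = (γ-2)+1 by ring, Real.rpow_add_one (by positivity)]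
    have e2 : (4/π:ℝ)^(γ-2)*(π/2)^(γ-2) = 2^(γ-2) := by
      rw [← Real.mul_rpow (by positivity) (by positivity)]
      congr 1
      field_simp
      ring
    have e3 : (2:ℝ)^(γ-2) ≤ 1 := Real.rpow_le_one_of_one_le_of_nonpos one_le_two (by linarith)
    have hπ : π ≤ 4 := by linarith [Real.pi_le_four]
    calc (4/π)^(γ-2) * (π/2)^(γ-1) = 2^(γ-2) * (π/2) := by rw [e1, ← mul_assoc, e2]
      _ ≤ 1 * (π/2) := by
          have : (0:ℝ) ≤ π/2 := by positivity
          nlinarith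
      _ ≤ 2 := by linarith
  rw [← mul_div_assoc]
  have hγ : (0:ℝ) < γ - 1 := by linarith
  gcongr

private lemma S_bound {γ : ℝ} (hγ1 : 1 < γ) (hγ2 : γ ≤ 2) :
    IntervalIntegrable (fun t : ℝ => Real.sin (2*t) ^ (γ-2)) volume 0 (π/2) ∧
      ∫ t in (0:ℝ)..(π/2), Real.sin (2*t) ^ (γ-2) ≤ 4/(γ-1) := by
  have hpi : (0:ℝ) ≤ π/2 := by positivity
  have hM : IntervalIntegrable
      (fun t : ℝ => (4/π*t) ^ (γ-2) + (4/π*(π/2 - t)) ^ (γ-2)) volume 0 (π/2) :=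
    (maj_int1 hγ1).add (maj_int2 hγ1)
  have hmeas : AEStronglyMeasurable (fun t : ℝ => Real.sin (2*t) ^ (γ-2))
      (volume.restrict (Set.uIoc 0 (π/2))) := by
    have : Measurable fun t : ℝ => Real.sin (2*t) ^ (γ-2) := by fun_prop
    exact this.aestronglyMeasurable
  have hsint : IntervalIntegrable (fun t : ℝ => Real.sin (2*t) ^ (γ-2)) volume 0 (π/2) := by
    refine hM.mono_fun hmeas ?_
    rw [Set.uIoc_of_le hpi]
    filter_upwards [ae_restrict_mem measurableSet_Ioc] with t ht
    have ht' : t ∈ Set.Icc (0:ℝ) (π/2) := Set.Ioc_subset_Icc_self ht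
    have h1 : (0:ℝ) ≤ Real.sin (2*t) ^ (γ-2) := by
      apply Real.rpow_nonneg
      apply Real.sin_nonneg_of_nonneg_of_le_pi <;> [linarith [ht'.1]; linarith [ht'.2]]
    have h2 : (0:ℝ) ≤ (4/π*t) ^ (γ-2) + (4/π*(π/2 - t)) ^ (γ-2) := by
      have := Real.rpow_nonneg (x := 4/π*t) (mul_nonneg (by positivity) ht'.1) (γ-2)
      have := Real.rpow_nonneg (x := 4/π*(π/2 - t)) (mul_nonneg (by positivity) (by linarith [ht'.2])) (γ-2)
      linarith
    simp only [Real.norm_eq_abs, abs_of_nonneg h1, abs_of_nonneg h2]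
    exact sin_maj hγ2 ht'
  refine ⟨hsint, ?_⟩
  have hmono := intervalIntegral.integral_mono_on hpi hsint hM (fun t ht => sin_maj hγ2 ht)
  have hsplit : ∫ t in (0:ℝ)..(π/2), ((4/π*t) ^ (γ-2) + (4/π*(π/2 - t)) ^ (γ-2))
      = (∫ t in (0:ℝ)..(π/2), (4/π*t) ^ (γ-2)) + ∫ t in (0:ℝ)..(π/2), (4/π*(π/2 - t)) ^ (γ-2) :=
    intervalIntegral.integral_add (maj_int1 hγ1) (maj_int2 hγ1)
  have hsym : ∫ t in (0:ℝ)..(π/2), (4/π*(π/2 - t)) ^ (γ-2)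
      = ∫ t in (0:ℝ)..(π/2), (4/π*t) ^ (γ-2) := by
    have := intervalIntegral.integral_comp_sub_left (a := (0:ℝ)) (b := π/2)
      (fun s : ℝ => (4/π*s) ^ (γ-2)) (π/2)
    simpa using this
  have hval := maj_val1 hγ1 hγ2
  rw [hsplit, hsym] at hmono
  have : 2/(γ-1) + 2/(γ-1) = 4/(γ-1) := by ring
  linarith

theorem stmt_9 :
    ∃ C : ℝ, 0 < C ∧
      ∀ γ : ℝ, 1 < γ → γ ≤ 2 →
        ∀ g : ℝ → ℝ, ContDiff ℝ 1 g → g 0 = 0 →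
          ∀ θ ∈ Set.Icc (0:ℝ) (π/2),
            (g θ)^2 ≤ (C / (γ - 1)) *
              ∫ t in (0:ℝ)..(π/2), (deriv g t)^2 * Real.sin (2*t) ^ (2 - γ) := by
  refine ⟨4, by norm_num, ?_⟩
  intro γ hγ1 hγ2 g hg hg0 θ hθ
  obtain ⟨hθ0, hθ1⟩ := hθ
  have hγ1' : (0:ℝ) < γ - 1 := by linarith
  have hpi : (0:ℝ) ≤ π/2 := by positivity
  set S' : ℝ := 4/(γ-1) with hS'def
  have hS'pos : 0 < S' := by positivity
  obtain ⟨hSint, hSle⟩ := S_bound hγ1 hγ2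
  have hg' : Continuous (deriv g) := hg.continuous_deriv le_rfl
  have hw_cont : Continuous fun t : ℝ => Real.sin (2*t) ^ (2-γ) :=
    (Real.continuous_rpow_const (by linarith)).comp
      (Real.continuous_sin.comp (continuous_const.mul continuous_id))
  have hH_cont : Continuous fun t : ℝ => (deriv g t)^2 * Real.sin (2*t) ^ (2-γ) :=
    (hg'.pow 2).mul hw_cont
  have hJint : IntervalIntegrable (fun t : ℝ => (deriv g t)^2 * Real.sin (2*t) ^ (2-γ))
      volume 0 (π/2) := hH_cont.intervalIntegrable 0 (π/2)
  set J : ℝ := ∫ t in (0:ℝ)..(π/2), (deriv g t)^2 * Real.sin (2*t) ^ (2-γ) with hJdef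
  have hHnn : ∀ t ∈ Set.Icc (0:ℝ) (π/2), 0 ≤ (deriv g t)^2 * Real.sin (2*t) ^ (2-γ) := by
    intro t ht
    have : (0:ℝ) ≤ Real.sin (2*t) :=
      Real.sin_nonneg_of_nonneg_of_le_pi (by linarith [ht.1]) (by linarith [ht.2])
    exact mul_nonneg (sq_nonneg _) (Real.rpow_nonneg this _)
  have hSnn : ∀ t ∈ Set.Icc (0:ℝ) (π/2), 0 ≤ Real.sin (2*t) ^ (γ-2) := by
    intro t ht
    have : (0:ℝ) ≤ Real.sin (2*t) :=
      Real.sin_nonneg_of_nonneg_of_le_pi (by linarith [ht.1]) (by linarith [ht.2])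
    exact Real.rpow_nonneg this _
  have hJ0 : 0 ≤ J := intervalIntegral.integral_nonneg hpi hHnn
  have hsub : Set.uIcc (0:ℝ) θ ⊆ Set.uIcc (0:ℝ) (π/2) := by
    rw [Set.uIcc_of_le hθ0, Set.uIcc_of_le hpi]
    exact Set.Icc_subset_Icc le_rfl hθ1
  -- FTC
  have hgθ : g θ = ∫ t in (0:ℝ)..θ, deriv g t := by
    have := intervalIntegral.integral_deriv_eq_sub
      (f := g) (a := 0) (b := θ)
      (fun x _ => (hg.differentiable one_ne_zero).differentiableAt)
      (hg'.intervalIntegrable 0 θ)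
    rw [hg0, sub_zero] at this
    exact this.symm
  -- key estimate
  have key : ∀ ε : ℝ, 0 < ε → |g θ| ≤ ε/2 * J + 1/(2*ε) * S' := by
    intro ε hε
    have habs_int : IntervalIntegrable (fun t => |deriv g t|) volume 0 θ :=
      (hg'.abs).intervalIntegrable 0 θ
    set φ : ℝ → ℝ := fun t =>
      ε/2 * ((deriv g t)^2 * Real.sin (2*t) ^ (2-γ)) + 1/(2*ε) * Real.sin (2*t) ^ (γ-2)
      with hφdef
    have hint1 : IntervalIntegrable
        (fun t : ℝ => (deriv g t)^2 * Real.sin (2*t) ^ (2-γ)) volume 0 θ :=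
      hJint.mono_set hsub
    have hint2 : IntervalIntegrable (fun t : ℝ => Real.sin (2*t) ^ (γ-2)) volume 0 θ :=
      hSint.mono_set hsub
    have hφint : IntervalIntegrable φ volume 0 θ :=
      (hint1.const_mul _).add (hint2.const_mul _)
    have hae : (fun t => |deriv g t|) ≤ᵐ[volume.restrict (Set.Icc 0 θ)] φ := by
      filter_upwards [ae_restrict_mem measurableSet_Icc,
        MeasureTheory.ae_restrict_of_ae (ae_ne_vol 0),
        MeasureTheory.ae_restrict_of_ae (ae_ne_vol (π/2))] with t ht h0 h1
      have ht0 : 0 < t := lt_of_le_of_ne ht.1 (Ne.symm h0)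
      have ht1 : t < π/2 := lt_of_le_of_ne (le_trans ht.2 hθ1) h1
      have hs : 0 < Real.sin (2*t) :=
        Real.sin_pos_of_pos_of_lt_pi (by linarith) (by linarith)
      set d := deriv g t with hd
      set p : ℝ := Real.sin (2*t) ^ ((2-γ)/2) with hp
      set q : ℝ := Real.sin (2*t) ^ ((γ-2)/2) with hq
      have hpq : p * q = 1 := by
        rw [hp, hq, ← Real.rpow_add hs, show (2-γ)/2 + (γ-2)/2 = 0 by ring, Real.rpow_zero]
      have hpp : p * p = Real.sin (2*t) ^ (2-γ) := by
        rw [hp, ← Real.rpow_add hs, show (2-γ)/2 + (2-γ)/2 = 2-γ by ring]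
      have hqq : q * q = Real.sin (2*t) ^ (γ-2) := by
        rw [hq, ← Real.rpow_add hs, show (γ-2)/2 + (γ-2)/2 = γ-2 by ring]
      have hstep : 2*ε * |d| ≤ ε^2*(d^2*(p*p)) + q*q := by
        have h3 := sq_nonneg (ε*(|d| * p) - q)
        have expand : (ε*(|d| * p) - q)^2
            = ε^2*((|d| * |d|)*(p*p)) - 2*ε * |d| * (p*q) + q*q := by ring
        rw [expand, hpq, mul_one, abs_mul_abs_self, ← pow_two] at h3
        linarith
      have : |d| ≤ ε/2*(d^2*(p*p)) + 1/(2*ε)*(q*q) := by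
        have h2ε : (0:ℝ) < 2*ε := by linarith
        calc |d| = (2*ε * |d|)/(2*ε) := by field_simp
          _ ≤ (ε^2*(d^2*(p*p)) + q*q)/(2*ε) := by gcongr
          _ = ε/2*(d^2*(p*p)) + 1/(2*ε)*(q*q) := by field_simp
      simpa [hφdef, hpp, hqq] using this
    have hmono : (∫ t in (0:ℝ)..θ, |deriv g t|) ≤ ∫ t in (0:ℝ)..θ, φ t :=
      intervalIntegral.integral_mono_ae_restrict hθ0 habs_int hφint hae
    have hsplit : (∫ t in (0:ℝ)..θ, φ t)
        = ε/2 * (∫ t in (0:ℝ)..θ, (deriv g t)^2 * Real.sin (2*t) ^ (2-γ))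
          + 1/(2*ε) * ∫ t in (0:ℝ)..θ, Real.sin (2*t) ^ (γ-2) := by
      rw [hφdef]
      rw [intervalIntegral.integral_add (hint1.const_mul _) (hint2.const_mul _),
        intervalIntegral.integral_const_mul, intervalIntegral.integral_const_mul]
    have hIθ : (∫ t in (0:ℝ)..θ, (deriv g t)^2 * Real.sin (2*t) ^ (2-γ)) ≤ J := by
      apply intervalIntegral.integral_mono_interval le_rfl hθ0 hθ1 _ hJint
      filter_upwards [ae_restrict_mem measurableSet_Ioc] with t ht
      exact hHnn t (Set.Ioc_subset_Icc_self ht)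
    have hSθ : (∫ t in (0:ℝ)..θ, Real.sin (2*t) ^ (γ-2)) ≤ S' := by
      refine le_trans ?_ hSle
      apply intervalIntegral.integral_mono_interval le_rfl hθ0 hθ1 _ hSint
      filter_upwards [ae_restrict_mem measurableSet_Ioc] with t ht
      exact hSnn t (Set.Ioc_subset_Icc_self ht)
    have habs : |g θ| ≤ ∫ t in (0:ℝ)..θ, |deriv g t| := by
      rw [hgθ]
      exact intervalIntegral.abs_integral_le_integral_abs hθ0
    have hc1 : ε/2 * (∫ t in (0:ℝ)..θ, (deriv g t)^2 * Real.sin (2*t) ^ (2-γ)) ≤ ε/2 * J :=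
      mul_le_mul_of_nonneg_left hIθ (by positivity)
    have hc2 : 1/(2*ε) * (∫ t in (0:ℝ)..θ, Real.sin (2*t) ^ (γ-2)) ≤ 1/(2*ε) * S' :=
      mul_le_mul_of_nonneg_left hSθ (by positivity)
    linarith [hmono, hsplit ▸ hmono]
  -- optimization
  have hfinal : (g θ)^2 ≤ J * S' := by
    rcases eq_or_lt_of_le hJ0 with hJz | hJpos
    · have hg0' : |g θ| ≤ 0 := by
        by_contra hcon
        push_neg at hcon
        have := key (S' / |g θ|) (by positivity)
        rw [← hJz] at this
        have : |g θ| ≤ 1/(2*(S' / |g θ|)) * S' := by linarith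
        have he : 1/(2*(S' / |g θ|)) * S' = |g θ|/2 := by
          field_simp
        rw [he] at this
        linarith
      have : g θ = 0 := abs_nonpos_iff.mp hg0'
      rw [this, ← hJz]
      simp
    · set a : ℝ := Real.sqrt J with hadef
      set b : ℝ := Real.sqrt S' with hbdef
      have ha0 : 0 < a := Real.sqrt_pos.2 hJpos
      have hb0 : 0 < b := Real.sqrt_pos.2 hS'pos
      have haa : a * a = J := Real.mul_self_sqrt hJ0
      have hbb : b * b = S' := Real.mul_self_sqrt hS'pos.le
      have hε : 0 < b / a := by positivity
      have h := key (b/a) hε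
      have e1 : (b/a)/2 * J = a*b/2 := by
        rw [← haa]; field_simp
      have e2 : 1/(2*(b/a)) * S' = a*b/2 := by
        rw [← hbb]; field_simp
      rw [e1, e2] at h
      nlinarith [sq_abs (g θ), abs_nonneg (g θ)]
  calc (g θ)^2 ≤ J * S' := hfinal
    _ = 4/(γ-1) * J := by rw [hS'def]; ring
    _ = _ := by rw [hJdef]
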